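/- Let σ ∈ (1,2) and α ∈ (0,1) with α < σ. There exists a constant C > 0 depending only on d, α, σ such that for every everywhere differentiable u : ℝ^d → ℝ with [∇u]_{σ−1;ℝ^d} < ∞, one has [∇u]_{σ−1;ℝ^d} ≤ C sup_{r>0} sup_{x_0∈ℝ^d} r^{α−σ} [u]_{Λ^α(B_r(x_0))} ≤ C sup_{r>0} sup_{x_0∈ℝ^d} r^{α−σ} inf_{p∈𝒫_1} [u−p]_{α;B_r(x_0)}. -/

import Mathlib

open MeasureTheory Metric Filter Set
open scoped ENNReal Topology

noncomputable section

/-- Hölder seminorm `[u]_{γ;Ω}` (valued in `ℝ≥0∞`). -/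
def holderSemi {E F : Type*} [NormedAddCommGroup E] [NormedAddCommGroup F]
    (γ : ℝ) (Ω : Set E) (u : E → F) : ℝ≥0∞ :=
  ⨆ (x : E) (_ : x ∈ Ω) (y : E) (_ : y ∈ Ω) (_ : x ≠ y),
    ENNReal.ofReal (‖u x - u y‖ / ‖x - y‖ ^ γ)

/-- Zygmund seminorm `[u]_{Λ^α(Ω)}` (valued in `ℝ≥0∞`). -/
def zygmundSemi {E : Type*} [NormedAddCommGroup E] (α : ℝ) (Ω : Set E) (u : E → ℝ) : ℝ≥0∞ :=
  ⨆ (x : E) (h : E) (_ : h ≠ 0) (_ : x ∈ Ω) (_ : x + h ∈ Ω) (_ : x - h ∈ Ω),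
    ENNReal.ofReal (|u (x + h) + u (x - h) - 2 * u x| / ‖h‖ ^ α)

/-- The `L_∞` norm of `u` on `Ω` (valued in `ℝ≥0∞`). -/
def eSupNorm {E : Type*} (Ω : Set E) (u : E → ℝ) : ℝ≥0∞ :=
  ⨆ (x : E) (_ : x ∈ Ω), ENNReal.ofReal |u x|

/-- A Dini function: nonnegative, nondecreasing on `(0,∞)`, with `∫_0^1 ω(r)/r dr < ∞`. -/
def IsDini (ω : ℝ → ℝ) : Prop :=
  (∀ r, 0 < r → 0 ≤ ω r) ∧ MonotoneOn ω (Set.Ioi (0:ℝ)) ∧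
    IntegrableOn (fun r => ω r / r) (Set.Ioc (0:ℝ) 1)

lemma star_bound {F : Type*} [NormedAddCommGroup F] [InnerProductSpace ℝ F]
    (σ : ℝ) (hσ1 : 1 < σ) (hσ2 : σ < 2) (u : F → ℝ) (hu : Differentiable ℝ u)
    (K : ℝ)
    (hglob : ∀ x h : F, |u (x + h) + u (x - h) - 2 * u x| ≤ K * ‖h‖ ^ σ) :
    ∀ x h : F, |u (x + h) - u x - fderiv ℝ u x h|
      ≤ (2 : ℝ) ^ (-σ) / (1 - 2 ^ ((1:ℝ) - σ)) * K * ‖h‖ ^ σ := by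
  intro x h
  set φ : ℝ → ℝ := fun s => u (x + s • h) with hφ
  have hline : ∀ s₀ : ℝ, HasDerivAt (fun s : ℝ => x + s • h) h s₀ := by
    intro s₀
    simpa using ((hasDerivAt_id s₀).smul_const h).const_add x
  have hφd : HasDerivAt φ (fderiv ℝ u x h) 0 := by
    have := ((hu (x + (0:ℝ) • h)).hasFDerivAt.comp_hasDerivAt 0 (hline 0))
    simp only [zero_smul, add_zero] at this
    exact this
  set t : ℕ → ℝ := fun n => (2 : ℝ)⁻¹ ^ n with ht
  have htpos : ∀ n, 0 < t n := fun n => by positivity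
  set f : ℕ → ℝ := fun n => slope φ 0 (t n) with hf
  have htend : Tendsto f atTop (𝓝 (fderiv ℝ u x h)) := by
    have h1 : Tendsto t atTop (𝓝[≠] 0) := by
      apply tendsto_nhdsWithin_of_tendsto_nhds_of_eventually_within
      · exact tendsto_pow_atTop_nhds_zero_of_lt_one (by norm_num) (by norm_num)
      · exact Eventually.of_forall fun n => (htpos n).ne'
    exact (hasDerivAt_iff_tendsto_slope.mp hφd).comp h1
  have hφ0 : φ 0 = u x := by simp [hφ]
  set r : ℝ := (2:ℝ) ^ ((1:ℝ) - σ) with hr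
  have hrlt : r < 1 := by
    apply Real.rpow_lt_one_of_one_lt_of_neg one_lt_two
    linarith
  have hrpos : 0 < r := Real.rpow_pos_of_pos two_pos _
  set C₀ : ℝ := (2:ℝ) ^ (-σ) * (K * ‖h‖ ^ σ) with hC₀
  have hstep : ∀ n, dist (f n) (f (n + 1)) ≤ C₀ * r ^ n := by
    intro n
    have h2t : t n = 2 * t (n + 1) := by
      simp only [ht, pow_succ]
      ring
    have hsm : t n • h = t (n+1) • h + t (n+1) • h := by
      rw [← add_smul, h2t]; ring_nf
    have hdiff : f n - f (n + 1) =
        (u ((x + t (n+1) • h) + t (n+1) • h) + u ((x + t (n+1) • h) - t (n+1) • h)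
          - 2 * u (x + t (n+1) • h)) / t n := by
      have e1 : f n = (u (x + t n • h) - u x) / t n := by
        simp [hf, slope_def_field, hφ, hφ0]
      have e2 : f (n+1) = (u (x + t (n+1) • h) - u x) / t (n+1) := by
        simp [hf, slope_def_field, hφ, hφ0]
      rw [e1, e2, h2t]
      have ht1 : t (n+1) ≠ 0 := (htpos (n+1)).ne'
      have e3 : x + t (n+1) • h + t (n+1) • h = x + t n • h := by
        rw [hsm]; abel
      have e4 : x + t (n+1) • h - t (n+1) • h = x := by abel
      rw [e3, e4, h2t]
      field_simp
      ring
    have hnorm : ‖t (n+1) • h‖ = t (n+1) * ‖h‖ := by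
      rw [norm_smul, Real.norm_eq_abs, abs_of_pos (htpos (n+1))]
    have hbd := hglob (x + t (n+1) • h) (t (n+1) • h)
    rw [hnorm] at hbd
    have hkey : (((2:ℝ)⁻¹ ^ (n+1)) ^ σ) / ((2:ℝ)⁻¹ ^ n) = 2 ^ (-σ) * r ^ n := by
      have h2 : (0:ℝ) < 2 := two_pos
      rw [hr, ← Real.rpow_natCast (2⁻¹ : ℝ) (n+1), ← Real.rpow_natCast (2⁻¹ : ℝ) n,
        ← Real.rpow_natCast ((2:ℝ) ^ ((1:ℝ) - σ)) n,
        Real.inv_rpow h2.le, Real.inv_rpow h2.le, ← Real.rpow_neg h2.le, ← Real.rpow_neg h2.le,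
        ← Real.rpow_mul h2.le, ← Real.rpow_mul h2.le, ← Real.rpow_sub h2, ← Real.rpow_add h2]
      congr 1
      push_cast
      ring
    rw [Real.dist_eq, hdiff, abs_div, abs_of_pos (htpos n), div_le_iff₀ (htpos n)]
    calc |u ((x + t (n+1) • h) + t (n+1) • h) + u ((x + t (n+1) • h) - t (n+1) • h)
          - 2 * u (x + t (n+1) • h)|
        ≤ K * (t (n+1) * ‖h‖) ^ σ := hbd
      _ = K * ((t (n+1)) ^ σ * ‖h‖ ^ σ) := by
          rw [Real.mul_rpow (htpos (n+1)).le (norm_nonneg h)]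
      _ = C₀ * r ^ n * t n := by
          have : (t (n+1)) ^ σ = (2 ^ (-σ) * r ^ n) * t n := by
            rw [← hkey]
            field_simp [ht]
            simp only [ht, one_div]
          rw [this, hC₀]
          ring
  have hfinal := dist_le_of_le_geometric_of_tendsto₀ r C₀ hrlt hstep htend
  have hf0 : f 0 = u (x + h) - u x := by
    simp [hf, ht, slope_def_field, hφ, hφ0]
  rw [hf0, Real.dist_eq] at hfinal
  calc |u (x + h) - u x - fderiv ℝ u x h| ≤ C₀ / (1 - r) := hfinal
    _ = (2 : ℝ) ^ (-σ) / (1 - 2 ^ ((1:ℝ) - σ)) * K * ‖h‖ ^ σ := by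
        rw [hC₀, hr]; ring

lemma grad_bound {F : Type*} [NormedAddCommGroup F] [InnerProductSpace ℝ F] [CompleteSpace F]
    (σ : ℝ) (hσ1 : 1 < σ) (hσ2 : σ < 2) (u : F → ℝ) (hu : Differentiable ℝ u)
    (K : ℝ) (hK : 0 ≤ K)
    (hglob : ∀ x h : F, |u (x + h) + u (x - h) - 2 * u x| ≤ K * ‖h‖ ^ σ) :
    ∀ x y : F, ‖gradient u x - gradient u y‖
      ≤ (2 * ((2 : ℝ) ^ (-σ) / (1 - 2 ^ ((1:ℝ) - σ))) + 2) * K * ‖x - y‖ ^ (σ - 1) := by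
  have hrlt : (2:ℝ) ^ ((1:ℝ) - σ) < 1 :=
    Real.rpow_lt_one_of_one_lt_of_neg one_lt_two (by linarith)
  have hCstar : 0 ≤ (2 : ℝ) ^ (-σ) / (1 - 2 ^ ((1:ℝ) - σ)) := by
    apply div_nonneg (Real.rpow_nonneg (by norm_num) _)
    linarith
  set Cstar : ℝ := (2 : ℝ) ^ (-σ) / (1 - 2 ^ ((1:ℝ) - σ)) with hCs
  intro x y
  rcases eq_or_ne x y with rfl | hxy
  · simp only [sub_self, norm_zero]
    rw [Real.zero_rpow (by linarith), mul_zero]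
  have hxypos : (0:ℝ) < ‖x - y‖ := by
    rw [norm_pos_iff, sub_ne_zero]; exact hxy
  set g : F := gradient u x - gradient u y with hg
  rcases eq_or_ne g 0 with hg0 | hg0
  · rw [hg0, norm_zero]; positivity
  have hgpos : (0:ℝ) < ‖g‖ := norm_pos_iff.mpr hg0
  set h : F := (‖x - y‖ / ‖g‖) • g with hh
  have hnh : ‖h‖ = ‖x - y‖ := by
    rw [hh, norm_smul, Real.norm_eq_abs, abs_of_pos (by positivity), div_mul_cancel₀]
    exact hgpos.ne'
  have hinner : (inner ℝ g h : ℝ) = ‖x - y‖ * ‖g‖ := by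
    rw [hh, real_inner_smul_right, real_inner_self_eq_norm_mul_norm]
    field_simp
  have hgrad : ∀ z : F, (inner ℝ (gradient u z) h : ℝ) = fderiv ℝ u z h := fun z =>
    InnerProductSpace.toDual_symm_apply
  have hinner2 : (inner ℝ g h : ℝ) = fderiv ℝ u x h - fderiv ℝ u y h := by
    rw [hg, inner_sub_left, hgrad, hgrad]
  -- mixed second difference
  set m : F := (2:ℝ)⁻¹ • (h + (x - y)) with hm
  set n : F := (2:ℝ)⁻¹ • (h - (x - y)) with hn
  set c : F := y + m with hc
  have hmm : m + m = h + (x - y) := by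
    rw [hm, ← add_smul]; norm_num
  have hnn : n + n = h - (x - y) := by
    rw [hn, ← add_smul]; norm_num
  have e1 : c + m = x + h := by
    rw [hc, add_assoc, hmm]; abel
  have e2 : c - m = y := by rw [hc]; abel
  have e3 : c + n = y + h := by
    have : m + n = h := by
      have := congrArg₂ (· + ·) hmm hnn
      have h2 : (m + n) + (m + n) = h + h := by
        calc (m + n) + (m + n) = (m + m) + (n + n) := by abel
          _ = h + h := by rw [hmm, hnn]; abel
      have := congrArg (fun z => (2:ℝ)⁻¹ • z) h2
      simpa [smul_add, ← two_smul ℝ, smul_smul] using this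
    rw [hc, add_assoc, this]
  have e4 : c - n = x := by
    have hmn : m - n = x - y := by
      rw [hm, hn, ← smul_sub]
      have : h + (x - y) - (h - (x - y)) = (2:ℝ) • (x - y) := by
        rw [two_smul]; abel
      rw [this, smul_smul]; norm_num
    rw [hc, add_sub_assoc, hmn]; abel
  have hmle : ‖m‖ ≤ ‖x - y‖ := by
    rw [hm, norm_smul, Real.norm_eq_abs]
    have := norm_add_le h (x - y)
    rw [hnh] at this
    rw [abs_of_pos (by norm_num : (0:ℝ) < 2⁻¹)]
    linarith
  have hnle : ‖n‖ ≤ ‖x - y‖ := by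
    rw [hn, norm_smul, Real.norm_eq_abs]
    have := norm_sub_le h (x - y)
    rw [hnh] at this
    rw [abs_of_pos (by norm_num : (0:ℝ) < 2⁻¹)]
    linarith
  have hDmix : |u (x + h) - u (y + h) - u x + u y| ≤ 2 * K * ‖x - y‖ ^ σ := by
    have key : u (x + h) - u (y + h) - u x + u y =
        (u (c + m) + u (c - m) - 2 * u c) - (u (c + n) + u (c - n) - 2 * u c) := by
      rw [e1, e2, e3, e4]; ring
    rw [key]
    have b1 := hglob c m
    have b2 := hglob c n
    have r1 : K * ‖m‖ ^ σ ≤ K * ‖x - y‖ ^ σ :=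
      mul_le_mul_of_nonneg_left (Real.rpow_le_rpow (norm_nonneg m) hmle (by linarith)) hK
    have r2 : K * ‖n‖ ^ σ ≤ K * ‖x - y‖ ^ σ :=
      mul_le_mul_of_nonneg_left (Real.rpow_le_rpow (norm_nonneg n) hnle (by linarith)) hK
    calc |(u (c + m) + u (c - m) - 2 * u c) - (u (c + n) + u (c - n) - 2 * u c)|
        ≤ |u (c + m) + u (c - m) - 2 * u c| + |u (c + n) + u (c - n) - 2 * u c| :=
          abs_sub _ _
      _ ≤ 2 * K * ‖x - y‖ ^ σ := by linarith
  have hA := star_bound σ hσ1 hσ2 u hu K hglob x h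
  have hB := star_bound σ hσ1 hσ2 u hu K hglob y h
  rw [hnh, ← hCs] at hA hB
  have hmain : ‖g‖ * ‖x - y‖ ≤ (2 * Cstar + 2) * K * ‖x - y‖ ^ σ := by
    have hid : (inner ℝ g h : ℝ) =
        (u (x + h) - u (y + h) - u x + u y)
          - (u (x + h) - u x - fderiv ℝ u x h)
          + (u (y + h) - u y - fderiv ℝ u y h) := by
      rw [hinner2]; ring
    have : (inner ℝ g h : ℝ) ≤ (2 * Cstar + 2) * K * ‖x - y‖ ^ σ := by
      rw [hid]
      have h1 := abs_le.mp hDmix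
      have h2 := abs_le.mp hA
      have h3 := abs_le.mp hB
      nlinarith [h1.1, h1.2, h2.1, h2.2, h3.1, h3.2]
    calc ‖g‖ * ‖x - y‖ = (inner ℝ g h : ℝ) := by rw [hinner]; ring
      _ ≤ _ := this
  have hpow : ‖x - y‖ ^ σ = ‖x - y‖ ^ (σ - 1) * ‖x - y‖ := by
    rw [show σ = (σ - 1) + 1 by ring]
    rw [Real.rpow_add hxypos, Real.rpow_one]
    ring_nf
  rw [hpow] at hmain
  have := (mul_le_mul_iff_of_pos_right hxypos).mp (by linarith [hmain] : ‖g‖ * ‖x - y‖ ≤ ((2 * Cstar + 2) * K * ‖x - y‖ ^ (σ - 1)) * ‖x - y‖)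
  exact this

lemma holder_term_le {E F : Type*} [NormedAddCommGroup E] [NormedAddCommGroup F]
    (γ : ℝ) (Ω : Set E) (u : E → F) {x y : E} (hx : x ∈ Ω) (hy : y ∈ Ω) (hxy : x ≠ y) :
    ENNReal.ofReal (‖u x - u y‖ / ‖x - y‖ ^ γ) ≤ holderSemi γ Ω u :=
  le_iSup_of_le x (le_iSup_of_le hx (le_iSup_of_le y (le_iSup_of_le hy
    (le_iSup_of_le hxy le_rfl))))

lemma zyg_term_le {E : Type*} [NormedAddCommGroup E]
    (α : ℝ) (Ω : Set E) (u : E → ℝ) {x h : E} (hne : h ≠ 0) (hx : x ∈ Ω)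
    (hxh : x + h ∈ Ω) (hxmh : x - h ∈ Ω) :
    ENNReal.ofReal (|u (x + h) + u (x - h) - 2 * u x| / ‖h‖ ^ α) ≤ zygmundSemi α Ω u :=
  le_iSup_of_le x (le_iSup_of_le h (le_iSup_of_le hne (le_iSup_of_le hx
    (le_iSup_of_le hxh (le_iSup_of_le hxmh le_rfl)))))

lemma holderSemi_le {E F : Type*} [NormedAddCommGroup E] [NormedAddCommGroup F]
    (γ : ℝ) (Ω : Set E) (u : E → F) (B : ℝ≥0∞)
    (hb : ∀ x ∈ Ω, ∀ y ∈ Ω, x ≠ y → ENNReal.ofReal (‖u x - u y‖ / ‖x - y‖ ^ γ) ≤ B) :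
    holderSemi γ Ω u ≤ B :=
  iSup_le fun x => iSup_le fun hx => iSup_le fun y => iSup_le fun hy =>
    iSup_le fun hxy => hb x hx y hy hxy

lemma zygmundSemi_le {E : Type*} [NormedAddCommGroup E]
    (α : ℝ) (Ω : Set E) (u : E → ℝ) (B : ℝ≥0∞)
    (hb : ∀ x h : E, h ≠ 0 → x ∈ Ω → x + h ∈ Ω → x - h ∈ Ω →
      ENNReal.ofReal (|u (x + h) + u (x - h) - 2 * u x| / ‖h‖ ^ α) ≤ B) :
    zygmundSemi α Ω u ≤ B :=
  iSup_le fun x => iSup_le fun h => iSup_le fun hne => iSup_le fun hx =>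
    iSup_le fun hxh => iSup_le fun hxmh => hb x h hne hx hxh hxmh

lemma zyg_le_two_holder {E : Type*} [NormedAddCommGroup E]
    (α : ℝ) (Ω : Set E) (v : E → ℝ) :
    zygmundSemi α Ω v ≤ 2 * holderSemi α Ω v := by
  apply zygmundSemi_le
  intro x h hne hx hxh hxmh
  have habs : |v (x + h) + v (x - h) - 2 * v x|
      ≤ |v (x + h) - v x| + |v (x - h) - v x| := by
    have e : v (x + h) + v (x - h) - 2 * v x = (v (x + h) - v x) + (v (x - h) - v x) := by
      ring
    rw [e]; exact abs_add_le _ _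
  have hc : (0:ℝ) < ‖h‖ ^ α := Real.rpow_pos_of_pos (norm_pos_iff.mpr hne) α
  have t1 : ENNReal.ofReal (|v (x + h) - v x| / ‖h‖ ^ α) ≤ holderSemi α Ω v := by
    have hne' : x + h ≠ x := by simpa using hne
    have := holder_term_le α Ω v hxh hx hne'
    simpa [Real.norm_eq_abs, add_sub_cancel_left] using this
  have t2 : ENNReal.ofReal (|v (x - h) - v x| / ‖h‖ ^ α) ≤ holderSemi α Ω v := by
    have hne' : x - h ≠ x := by simpa [sub_eq_self] using hne
    have := holder_term_le α Ω v hxmh hx hne'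
    simpa [Real.norm_eq_abs, sub_sub_cancel_left] using this
  calc ENNReal.ofReal (|v (x + h) + v (x - h) - 2 * v x| / ‖h‖ ^ α)
      ≤ ENNReal.ofReal (|v (x + h) - v x| / ‖h‖ ^ α + |v (x - h) - v x| / ‖h‖ ^ α) := by
        apply ENNReal.ofReal_le_ofReal
        rw [← add_div]
        exact div_le_div_of_nonneg_right habs hc.le |>.trans le_rfl
    _ ≤ ENNReal.ofReal (|v (x + h) - v x| / ‖h‖ ^ α)
          + ENNReal.ofReal (|v (x - h) - v x| / ‖h‖ ^ α) := ENNReal.ofReal_add_le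
    _ ≤ holderSemi α Ω v + holderSemi α Ω v := add_le_add t1 t2
    _ = 2 * holderSemi α Ω v := (two_mul _).symm

lemma zyg_affine {F : Type*} [NormedAddCommGroup F] [InnerProductSpace ℝ F]
    (α : ℝ) (Ω : Set F) (u : F → ℝ) (a0 : ℝ) (b : F) :
    zygmundSemi α Ω (fun x => u x - (a0 + (inner ℝ b x : ℝ))) = zygmundSemi α Ω u := by
  unfold zygmundSemi
  refine iSup_congr fun x => iSup_congr fun h => iSup_congr fun _ => iSup_congr fun _ =>
    iSup_congr fun _ => iSup_congr fun _ => ?_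
  have e : (u (x + h) - (a0 + (inner ℝ b (x + h) : ℝ)))
        + (u (x - h) - (a0 + (inner ℝ b (x - h) : ℝ)))
        - 2 * (u x - (a0 + (inner ℝ b x : ℝ)))
      = u (x + h) + u (x - h) - 2 * u x := by
    rw [inner_add_right, inner_sub_right]
    ring
  simp only [e]

/-- Campanato-type characterization of the `C^σ` seminorm, `σ ∈ (1,2)`. -/
theorem holder_le_zygmund_series_order_gt_one
    (d : ℕ) (hd : 1 ≤ d) (σ α : ℝ) (hσ1 : 1 < σ) (hσ2 : σ < 2)
    (hα : 0 < α) (hα1 : α < 1) (hασ : α < σ) :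
    ∃ C : ℝ, 0 < C ∧
      ∀ u : EuclideanSpace ℝ (Fin d) → ℝ, Differentiable ℝ u →
        holderSemi (σ - 1) (Set.univ : Set (EuclideanSpace ℝ (Fin d))) (gradient u) < ⊤ →
        holderSemi (σ - 1) (Set.univ : Set (EuclideanSpace ℝ (Fin d))) (gradient u) ≤
            ENNReal.ofReal C *
              ⨆ (r : ℝ) (_ : 0 < r) (x0 : EuclideanSpace ℝ (Fin d)),
                ENNReal.ofReal (r ^ (α - σ)) * zygmundSemi α (ball x0 r) u ∧
          (⨆ (r : ℝ) (_ : 0 < r) (x0 : EuclideanSpace ℝ (Fin d)),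
              ENNReal.ofReal (r ^ (α - σ)) * zygmundSemi α (ball x0 r) u) ≤
            ENNReal.ofReal C *
              ⨆ (r : ℝ) (_ : 0 < r) (x0 : EuclideanSpace ℝ (Fin d)),
                ENNReal.ofReal (r ^ (α - σ)) *
                  ⨅ (a0 : ℝ) (b : EuclideanSpace ℝ (Fin d)),
                    holderSemi α (ball x0 r) (fun x => u x - (a0 + (inner ℝ b x : ℝ))) := by
  have hrlt : (2:ℝ) ^ ((1:ℝ) - σ) < 1 :=
    Real.rpow_lt_one_of_one_lt_of_neg one_lt_two (by linarith)
  set Cstar : ℝ := (2 : ℝ) ^ (-σ) / (1 - 2 ^ ((1:ℝ) - σ)) with hCs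
  have hCstar : 0 ≤ Cstar := by
    apply div_nonneg (Real.rpow_nonneg (by norm_num) _)
    linarith
  have hpow2 : (0:ℝ) < (2:ℝ) ^ (σ - α) := Real.rpow_pos_of_pos two_pos _
  set C : ℝ := (2 * Cstar + 2) * (2:ℝ) ^ (σ - α) + 2 with hC
  have hCpos : 0 < C := by positivity
  have hC2 : (2:ℝ) ≤ C := by nlinarith
  refine ⟨C, hCpos, fun u hu hfin => ?_⟩

  set S : ℝ≥0∞ := ⨆ (r : ℝ) (_ : 0 < r) (x0 : EuclideanSpace ℝ (Fin d)),
      ENNReal.ofReal (r ^ (α - σ)) * zygmundSemi α (ball x0 r) u with hS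
  set T : ℝ≥0∞ := ⨆ (r : ℝ) (_ : 0 < r) (x0 : EuclideanSpace ℝ (Fin d)),
      ENNReal.ofReal (r ^ (α - σ)) *
        ⨅ (a0 : ℝ) (b : EuclideanSpace ℝ (Fin d)),
          holderSemi α (ball x0 r) (fun x => u x - (a0 + (inner ℝ b x : ℝ))) with hT
  constructor
  · -- first inequality
    by_cases hStop : S = ⊤
    · rw [hStop, ENNReal.mul_top (ENNReal.ofReal_pos.mpr hCpos).ne']
      exact le_top
    · set M₀ : ℝ := S.toReal with hM₀def
      have hM₀ : 0 ≤ M₀ := ENNReal.toReal_nonneg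
      have hSof : S = ENNReal.ofReal M₀ := (ENNReal.ofReal_toReal hStop).symm
      have hglob : ∀ x h : EuclideanSpace ℝ (Fin d), |u (x + h) + u (x - h) - 2 * u x|
          ≤ ((2:ℝ) ^ (σ - α) * M₀) * ‖h‖ ^ σ := by
        intro x h
        rcases eq_or_ne h 0 with rfl | hne
        · have e : u (x + 0) + u (x - 0) - 2 * u x = 0 := by
            rw [add_zero, sub_zero]; ring
          rw [e, abs_zero, norm_zero, Real.zero_rpow (by linarith), mul_zero]
        · have hhn : (0:ℝ) < ‖h‖ := norm_pos_iff.mpr hne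
          set r : ℝ := 2 * ‖h‖ with hrdef
          have hr : 0 < r := by positivity
          have hx : x ∈ ball x r := mem_ball_self hr
          have hxh : x + h ∈ ball x r := by
            rw [mem_ball, dist_eq_norm, add_sub_cancel_left]
            linarith
          have hxmh : x - h ∈ ball x r := by
            rw [mem_ball, dist_eq_norm, sub_sub_cancel_left, norm_neg]
            linarith
          set q : ℝ := |u (x + h) + u (x - h) - 2 * u x| / ‖h‖ ^ α with hq
          have hqnn : 0 ≤ q := by positivity
          have chain : ENNReal.ofReal (r ^ (α - σ)) * ENNReal.ofReal q ≤ S := by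
            calc ENNReal.ofReal (r ^ (α - σ)) * ENNReal.ofReal q
                ≤ ENNReal.ofReal (r ^ (α - σ)) * zygmundSemi α (ball x r) u :=
                  mul_le_mul_right (zyg_term_le α _ u hne hx hxh hxmh) _
              _ ≤ S := le_iSup_of_le r (le_iSup_of_le hr (le_iSup_of_le x le_rfl))
          rw [← ENNReal.ofReal_mul (Real.rpow_nonneg hr.le _), hSof] at chain
          have hreal : r ^ (α - σ) * q ≤ M₀ :=
            (ENNReal.ofReal_le_ofReal_iff hM₀).mp chain
          have hq2 : q ≤ r ^ (σ - α) * M₀ := by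
            have h0 : r ^ (σ - α) * (r ^ (α - σ) * q) = q := by
              rw [← mul_assoc, ← Real.rpow_add hr]
              norm_num
            calc q = r ^ (σ - α) * (r ^ (α - σ) * q) := h0.symm
              _ ≤ r ^ (σ - α) * M₀ :=
                  mul_le_mul_of_nonneg_left hreal (Real.rpow_nonneg hr.le _)
          have habs : |u (x + h) + u (x - h) - 2 * u x| = q * ‖h‖ ^ α := by
            rw [hq, div_mul_cancel₀]
            exact (Real.rpow_pos_of_pos hhn α).ne'
          have hrpow : r ^ (σ - α) = (2:ℝ) ^ (σ - α) * ‖h‖ ^ (σ - α) := by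
            rw [hrdef, Real.mul_rpow (by norm_num) hhn.le]
          have hhcomb : ‖h‖ ^ (σ - α) * ‖h‖ ^ α = ‖h‖ ^ σ := by
            rw [← Real.rpow_add hhn]
            norm_num
          calc |u (x + h) + u (x - h) - 2 * u x| = q * ‖h‖ ^ α := habs
            _ ≤ (r ^ (σ - α) * M₀) * ‖h‖ ^ α :=
                mul_le_mul_of_nonneg_right hq2 (Real.rpow_nonneg (norm_nonneg h) α)
            _ = ((2:ℝ) ^ (σ - α) * M₀) * ‖h‖ ^ σ := by
                rw [hrpow, ← hhcomb]; ring
      have hK : (0:ℝ) ≤ (2:ℝ) ^ (σ - α) * M₀ := by positivity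
      have hgb := grad_bound σ hσ1 hσ2 u hu _ hK hglob
      have hB : holderSemi (σ - 1) (Set.univ : Set (EuclideanSpace ℝ (Fin d))) (gradient u)
          ≤ ENNReal.ofReal ((2 * Cstar + 2) * ((2:ℝ) ^ (σ - α) * M₀)) := by
        apply holderSemi_le
        intro x _ y _ hxy
        apply ENNReal.ofReal_le_ofReal
        have hxypos : (0:ℝ) < ‖x - y‖ ^ (σ - 1) :=
          Real.rpow_pos_of_pos (by rw [norm_pos_iff, sub_ne_zero]; exact hxy) _
        rw [div_le_iff₀ hxypos]
        simpa [hCs] using hgb x y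
      calc holderSemi (σ - 1) (Set.univ : Set (EuclideanSpace ℝ (Fin d))) (gradient u)
          ≤ ENNReal.ofReal ((2 * Cstar + 2) * ((2:ℝ) ^ (σ - α) * M₀)) := hB
        _ = ENNReal.ofReal ((2 * Cstar + 2) * (2:ℝ) ^ (σ - α)) * ENNReal.ofReal M₀ := by
            rw [← ENNReal.ofReal_mul (by positivity)]
            ring_nf
        _ ≤ ENNReal.ofReal C * S := by
            rw [hSof]
            exact mul_le_mul_left (ENNReal.ofReal_le_ofReal (by nlinarith)) _
  · -- second inequality
    have key : S ≤ 2 * T := by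
      apply iSup_le; intro r; apply iSup_le; intro hr; apply iSup_le; intro x0
      set I : ℝ≥0∞ := ⨅ (a0 : ℝ) (b : EuclideanSpace ℝ (Fin d)),
          holderSemi α (ball x0 r) (fun x => u x - (a0 + (inner ℝ b x : ℝ))) with hI
      have hz : zygmundSemi α (ball x0 r) u ≤ 2 * I := by
        have hdiv : zygmundSemi α (ball x0 r) u / 2 ≤ I := by
          refine le_iInf fun a0 => le_iInf fun b => ?_
          apply ENNReal.div_le_of_le_mul
          rw [mul_comm]
          calc zygmundSemi α (ball x0 r) u
              = zygmundSemi α (ball x0 r) (fun x => u x - (a0 + (inner ℝ b x : ℝ))) :=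
                (zyg_affine α _ u a0 b).symm
            _ ≤ 2 * holderSemi α (ball x0 r) (fun x => u x - (a0 + (inner ℝ b x : ℝ))) :=
                zyg_le_two_holder α _ _
        calc zygmundSemi α (ball x0 r) u
            = 2 * (zygmundSemi α (ball x0 r) u / 2) := by
              rw [ENNReal.mul_div_cancel' (by norm_num) (by norm_num)]
          _ ≤ 2 * I := mul_le_mul_right hdiv _
      calc ENNReal.ofReal (r ^ (α - σ)) * zygmundSemi α (ball x0 r) u
          ≤ ENNReal.ofReal (r ^ (α - σ)) * (2 * I) := mul_le_mul_right hz _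
        _ = 2 * (ENNReal.ofReal (r ^ (α - σ)) * I) := by ring
        _ ≤ 2 * T := by
            have hle : ENNReal.ofReal (r ^ (α - σ)) * I ≤ T :=
              le_iSup_of_le r (le_iSup_of_le hr (le_iSup_of_le x0 le_rfl))
            exact mul_le_mul_right hle 2
    calc S ≤ 2 * T := key
      _ ≤ ENNReal.ofReal C * T := by
          apply mul_le_mul_left
          rw [show (2:ℝ≥0∞) = ENNReal.ofReal 2 by simp]
          exact ENNReal.ofReal_le_ofReal hC2
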